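/- Let A₀, A₁ be n×n real matrices, λ ∈ [0,1], β ∈ (0,1], and define 𝓛(X) = λA₁XA₁ᵀ + (1-λ)A₀XA₀ᵀ for n×n real matrices X. Suppose there exists a symmetric positive definite matrix Ξ such that Ξ - β·𝓛(Ξ) is positive definite. Then for every symmetric n×n real matrix C there exists a unique symmetric n×n matrix P satisfying P = β·𝓛(P) + C; moreover, if C is positive semidefinite then this unique solution P is positive semidefinite. -/

import Mathlib

open Matrix

lemma aux_quad_lower {n : ℕ} {D : Matrix (Fin n) (Fin n) ℝ} (hD : D.PosDef) :
    ∃ μ > 0, ∀ x : Fin n → ℝ, μ * (x ⬝ᵥ x) ≤ x ⬝ᵥ (D *ᵥ x) := by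
  rcases Nat.eq_zero_or_pos n with hn | hn
  · subst hn
    refine ⟨1, one_pos, fun x => ?_⟩
    have : x = 0 := Subsingleton.elim _ _
    simp [this]
  · have hne : (Metric.sphere (0 : EuclideanSpace ℝ (Fin n)) 1).Nonempty :=
      ⟨EuclideanSpace.single ⟨0, hn⟩ 1, by
        simp [mem_sphere_zero_iff_norm, EuclideanSpace.norm_single]⟩
    have hcont : Continuous fun x : EuclideanSpace ℝ (Fin n) =>
        (x : Fin n → ℝ) ⬝ᵥ (D *ᵥ (x : Fin n → ℝ)) := by
      simp only [dotProduct, mulVec]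
      refine continuous_finset_sum _ fun i _ => ?_
      exact (((continuous_apply i).comp (PiLp.continuous_ofLp 2 _)).mul (continuous_finset_sum _ fun j _ =>
        continuous_const.mul ((continuous_apply j).comp (PiLp.continuous_ofLp 2 _))))
    obtain ⟨x₀, hx₀s, hmin⟩ := (isCompact_sphere (0 : EuclideanSpace ℝ (Fin n)) 1).exists_isMinOn
      hne hcont.continuousOn
    set μ := (x₀ : Fin n → ℝ) ⬝ᵥ (D *ᵥ (x₀ : Fin n → ℝ)) with hμdef
    have hx₀ne : (x₀ : Fin n → ℝ) ≠ 0 := by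
      intro h
      have : ‖x₀‖ = 1 := mem_sphere_zero_iff_norm.mp hx₀s
      rw [show x₀ = 0 from WithLp.ofLp_injective 2 h] at this
      simp at this
    have hμpos : 0 < μ := by simpa using hD.dotProduct_mulVec_pos hx₀ne
    refine ⟨μ, hμpos, fun x => ?_⟩
    by_cases hx : x = 0
    · simp [hx]
    · -- normalize x
      have hxx : 0 < x ⬝ᵥ x := by
        have h1 : ∀ i, 0 ≤ x i * x i := fun i => mul_self_nonneg _
        have h2 : ∃ i, x i ≠ 0 := by
          by_contra h
          push_neg at h
          exact hx (funext h)
        obtain ⟨i, hi⟩ := h2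
        have : 0 < x i * x i := mul_self_pos.mpr hi
        exact Finset.sum_pos' (fun j _ => h1 j) ⟨i, Finset.mem_univ i, this⟩
      set r : ℝ := Real.sqrt (x ⬝ᵥ x) with hr
      have hrpos : 0 < r := Real.sqrt_pos.mpr hxx
      set u : EuclideanSpace ℝ (Fin n) := WithLp.toLp 2 (r⁻¹ • x) with hu
      have huu : (u : Fin n → ℝ) ⬝ᵥ (u : Fin n → ℝ) = 1 := by
        have : (u : Fin n → ℝ) ⬝ᵥ u = r⁻¹ * (r⁻¹ * (x ⬝ᵥ x)) := by
          simp [hu, smul_dotProduct, dotProduct_smul]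
        rw [this, ← mul_assoc, ← mul_inv, hr]
        rw [Real.mul_self_sqrt hxx.le]
        exact inv_mul_cancel₀ hxx.ne'
      have husphere : u ∈ Metric.sphere (0 : EuclideanSpace ℝ (Fin n)) 1 := by
        rw [mem_sphere_zero_iff_norm]
        have : ‖u‖ = Real.sqrt (∑ i, ‖u i‖ ^ 2) := EuclideanSpace.norm_eq u
        rw [this]
        have : ∑ i, ‖u i‖ ^ 2 = (u : Fin n → ℝ) ⬝ᵥ u := by
          simp [dotProduct, sq_abs, sq]
        rw [this, huu, Real.sqrt_one]
      have hqu : μ ≤ (u : Fin n → ℝ) ⬝ᵥ (D *ᵥ (u : Fin n → ℝ)) := hmin husphere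
      have hscale : (u : Fin n → ℝ) ⬝ᵥ (D *ᵥ (u : Fin n → ℝ))
          = r⁻¹ * (r⁻¹ * (x ⬝ᵥ (D *ᵥ x))) := by
        simp [hu, smul_dotProduct, dotProduct_smul, mulVec_smul]
      have hr2 : r * r = x ⬝ᵥ x := Real.mul_self_sqrt hxx.le
      rw [hscale] at hqu
      calc μ * (x ⬝ᵥ x) = μ * (r * r) := by rw [hr2]
        _ ≤ (r⁻¹ * (r⁻¹ * (x ⬝ᵥ (D *ᵥ x)))) * (r * r) := by
            apply mul_le_mul_of_nonneg_right hqu (by positivity)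
        _ = x ⬝ᵥ (D *ᵥ x) := by field_simp


lemma aux_cs2 (a b c d : ℝ) (ha : 0 ≤ a) (hb : 0 ≤ b) (hc : 0 ≤ c) (hd : 0 ≤ d) :
    a * b + c * d ≤ Real.sqrt (a ^ 2 + c ^ 2) * Real.sqrt (b ^ 2 + d ^ 2) := by
  rw [← Real.sqrt_mul (by positivity)]
  rw [Real.le_sqrt (by positivity) (by positivity)]
  nlinarith [sq_nonneg (a * d - c * b)]

lemma aux_dot_self_nonneg {n : ℕ} (x : Fin n → ℝ) : 0 ≤ x ⬝ᵥ x :=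
  Finset.sum_nonneg fun i _ => mul_self_nonneg _

lemma aux_sq_le_dot {n : ℕ} (x : Fin n → ℝ) (i : Fin n) : x i * x i ≤ x ⬝ᵥ x := by
  simpa [dotProduct] using Finset.single_le_sum (f := fun k => x k * x k)
    (fun k _ => mul_self_nonneg _) (Finset.mem_univ i)

-- upper bound of quadratic form by dot product
lemma aux_quad_upper {n : ℕ} (M : Matrix (Fin n) (Fin n) ℝ) :
    ∃ S > 0, ∀ x : Fin n → ℝ, x ⬝ᵥ (M *ᵥ x) ≤ S * (x ⬝ᵥ x) := by
  refine ⟨(∑ i, ∑ j, |M i j|) + 1, by positivity, fun x => ?_⟩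
  have hxx : 0 ≤ x ⬝ᵥ x := aux_dot_self_nonneg x
  have hSnn : 0 ≤ ∑ i, ∑ j, |M i j| :=
    Finset.sum_nonneg fun i _ => Finset.sum_nonneg fun j _ => abs_nonneg _
  have hterm : ∀ i j, x i * (M i j * x j) ≤ |M i j| * (x ⬝ᵥ x) := by
    intro i j
    have hxi := aux_sq_le_dot x i
    have hxj := aux_sq_le_dot x j
    have habs : |x i * x j| ≤ x ⬝ᵥ x := by
      rw [abs_mul]
      nlinarith [sq_nonneg (|x i| - |x j|), sq_abs (x i), sq_abs (x j),
        abs_nonneg (x i), abs_nonneg (x j)]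
    calc x i * (M i j * x j) = M i j * (x i * x j) := by ring
      _ ≤ |M i j * (x i * x j)| := le_abs_self _
      _ = |M i j| * |x i * x j| := abs_mul _ _
      _ ≤ |M i j| * (x ⬝ᵥ x) := mul_le_mul_of_nonneg_left habs (abs_nonneg _)
  calc x ⬝ᵥ (M *ᵥ x) = ∑ i, ∑ j, x i * (M i j * x j) := by
        simp [dotProduct, mulVec, Finset.mul_sum]
      _ ≤ ∑ i, ∑ j, |M i j| * (x ⬝ᵥ x) :=
        Finset.sum_le_sum fun i _ => Finset.sum_le_sum fun j _ => hterm i j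
      _ = (∑ i, ∑ j, |M i j|) * (x ⬝ᵥ x) := by
        rw [Finset.sum_mul]; exact Finset.sum_congr rfl fun i _ => (Finset.sum_mul _ _ _).symm
      _ ≤ ((∑ i, ∑ j, |M i j|) + 1) * (x ⬝ᵥ x) := by nlinarith

-- base bilinear bound
lemma aux_bilin_base {n : ℕ} (X : Matrix (Fin n) (Fin n) ℝ) {μ : ℝ} (hμ : 0 < μ)
    {q : (Fin n → ℝ) → ℝ} (hq : ∀ x, μ * (x ⬝ᵥ x) ≤ q x) :
    ∃ c ≥ 0, ∀ x z : Fin n → ℝ,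
      |x ⬝ᵥ (X *ᵥ z)| ≤ c * Real.sqrt (q x) * Real.sqrt (q z) := by
  refine ⟨(∑ i, ∑ j, |X i j|) / μ, by positivity, fun x z => ?_⟩
  have hxx : 0 ≤ x ⬝ᵥ x := aux_dot_self_nonneg x
  have hzz : 0 ≤ z ⬝ᵥ z := aux_dot_self_nonneg z
  have hqx : 0 ≤ q x := le_trans (by positivity) (hq x)
  have hqz : 0 ≤ q z := le_trans (by positivity) (hq z)
  have hSnn : 0 ≤ ∑ i, ∑ j, |X i j| :=
    Finset.sum_nonneg fun i _ => Finset.sum_nonneg fun j _ => abs_nonneg _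
  have key : ∀ (y : Fin n → ℝ), 0 ≤ y ⬝ᵥ y → 0 ≤ q y →
      Real.sqrt (y ⬝ᵥ y) ≤ Real.sqrt (q y) / Real.sqrt μ := by
    intro y hyy hqy
    have h1 : y ⬝ᵥ y ≤ q y / μ := by
      rw [le_div_iff₀ hμ]
      calc y ⬝ᵥ y * μ = μ * (y ⬝ᵥ y) := mul_comm _ _
        _ ≤ q y := hq y
    calc Real.sqrt (y ⬝ᵥ y) ≤ Real.sqrt (q y / μ) := Real.sqrt_le_sqrt h1
      _ = Real.sqrt (q y) / Real.sqrt μ := Real.sqrt_div hqy μ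
  have hbound : |x ⬝ᵥ (X *ᵥ z)| ≤ (∑ i, ∑ j, |X i j|) * (Real.sqrt (x ⬝ᵥ x) * Real.sqrt (z ⬝ᵥ z)) := by
    have h1 : |x ⬝ᵥ (X *ᵥ z)| ≤ ∑ i, ∑ j, |x i| * |X i j| * |z j| := by
      calc |x ⬝ᵥ (X *ᵥ z)| = |∑ i, ∑ j, x i * (X i j * z j)| := by
            simp [dotProduct, mulVec, Finset.mul_sum]
        _ ≤ ∑ i, |∑ j, x i * (X i j * z j)| := Finset.abs_sum_le_sum_abs _ _
        _ ≤ ∑ i, ∑ j, |x i * (X i j * z j)| :=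
            Finset.sum_le_sum fun i _ => Finset.abs_sum_le_sum_abs _ _
        _ = ∑ i, ∑ j, |x i| * |X i j| * |z j| := by
            refine Finset.sum_congr rfl fun i _ => Finset.sum_congr rfl fun j _ => ?_
            rw [abs_mul, abs_mul]; ring
    refine h1.trans ?_
    have h2 : ∀ i j, |x i| * |X i j| * |z j| ≤ |X i j| * (Real.sqrt (x ⬝ᵥ x) * Real.sqrt (z ⬝ᵥ z)) := by
      intro i j
      have hxi : |x i| ≤ Real.sqrt (x ⬝ᵥ x) := by
        rw [show |x i| = Real.sqrt (x i ^ 2) from (Real.sqrt_sq_eq_abs _).symm]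
        exact Real.sqrt_le_sqrt (by nlinarith [aux_sq_le_dot x i])
      have hzj : |z j| ≤ Real.sqrt (z ⬝ᵥ z) := by
        rw [show |z j| = Real.sqrt (z j ^ 2) from (Real.sqrt_sq_eq_abs _).symm]
        exact Real.sqrt_le_sqrt (by nlinarith [aux_sq_le_dot z j])
      calc |x i| * |X i j| * |z j| = |X i j| * (|x i| * |z j|) := by ring
        _ ≤ |X i j| * (Real.sqrt (x ⬝ᵥ x) * Real.sqrt (z ⬝ᵥ z)) := by
            apply mul_le_mul_of_nonneg_left _ (abs_nonneg _)
            exact mul_le_mul hxi hzj (abs_nonneg _) (Real.sqrt_nonneg _)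
    calc ∑ i, ∑ j, |x i| * |X i j| * |z j|
        ≤ ∑ i, ∑ j, |X i j| * (Real.sqrt (x ⬝ᵥ x) * Real.sqrt (z ⬝ᵥ z)) :=
          Finset.sum_le_sum fun i _ => Finset.sum_le_sum fun j _ => h2 i j
      _ = (∑ i, ∑ j, |X i j|) * (Real.sqrt (x ⬝ᵥ x) * Real.sqrt (z ⬝ᵥ z)) := by
          rw [Finset.sum_mul]; exact Finset.sum_congr rfl fun i _ => (Finset.sum_mul _ _ _).symm
  refine hbound.trans ?_
  have hμs : 0 < Real.sqrt μ := Real.sqrt_pos.mpr hμ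
  have hxle := key x hxx hqx
  have hzle := key z hzz hqz
  calc (∑ i, ∑ j, |X i j|) * (Real.sqrt (x ⬝ᵥ x) * Real.sqrt (z ⬝ᵥ z))
      ≤ (∑ i, ∑ j, |X i j|) * ((Real.sqrt (q x) / Real.sqrt μ) * (Real.sqrt (q z) / Real.sqrt μ)) := by
        apply mul_le_mul_of_nonneg_left _ hSnn
        exact mul_le_mul hxle hzle (Real.sqrt_nonneg _) (by positivity)
    _ = (∑ i, ∑ j, |X i j|) / μ * Real.sqrt (q x) * Real.sqrt (q z) := by
        rw [div_mul_div_comm, Real.mul_self_sqrt hμ.le]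
        ring


section m
variable {n : ℕ} {A₀ A₁ : Matrix (Fin n) (Fin n) ℝ} {lam β : ℝ}
  {L : Matrix (Fin n) (Fin n) ℝ → Matrix (Fin n) (Fin n) ℝ}

lemma aux_conj_form' (A X : Matrix (Fin n) (Fin n) ℝ) (x z : Fin n → ℝ) :
    x ⬝ᵥ ((A * X * Aᵀ) *ᵥ z) = (Aᵀ *ᵥ x) ⬝ᵥ (X *ᵥ (Aᵀ *ᵥ z)) := by
  rw [← mulVec_mulVec, ← mulVec_mulVec, dotProduct_mulVec, mulVec_transpose, mulVec_transpose]

lemma aux_exp' (hL : ∀ X, L X = lam • (A₁ * X * A₁ᵀ) + (1 - lam) • (A₀ * X * A₀ᵀ))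
    (X : Matrix (Fin n) (Fin n) ℝ) (x z : Fin n → ℝ) :
    x ⬝ᵥ ((β • L X) *ᵥ z) =
      (β * lam) * ((A₁ᵀ *ᵥ x) ⬝ᵥ (X *ᵥ (A₁ᵀ *ᵥ z)))
        + (β * (1 - lam)) * ((A₀ᵀ *ᵥ x) ⬝ᵥ (X *ᵥ (A₀ᵀ *ᵥ z))) := by
  have h : β • L X = (β * lam) • (A₁ * X * A₁ᵀ) + (β * (1 - lam)) • (A₀ * X * A₀ᵀ) := by
    rw [hL, smul_add, smul_smul, smul_smul]
  rw [h, add_mulVec, dotProduct_add, smul_mulVec, smul_mulVec,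
    dotProduct_smul, dotProduct_smul, aux_conj_form', aux_conj_form', smul_eq_mul, smul_eq_mul]

lemma aux_contract (hlam0 : 0 ≤ lam) (hlam1 : lam ≤ 1) (hβ0 : 0 < β)
    (hL : ∀ X, L X = lam • (A₁ * X * A₁ᵀ) + (1 - lam) • (A₀ * X * A₀ᵀ))
    (Ξ : Matrix (Fin n) (Fin n) ℝ) (hqnn : ∀ x, 0 ≤ x ⬝ᵥ (Ξ *ᵥ x))
    {ρ : ℝ} (hρ0 : 0 ≤ ρ)
    (hρle : ∀ x, x ⬝ᵥ ((β • L Ξ) *ᵥ x) ≤ ρ * (x ⬝ᵥ (Ξ *ᵥ x)))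
    (X : Matrix (Fin n) (Fin n) ℝ) {c : ℝ} (hc : 0 ≤ c)
    (hXb : ∀ x z, |x ⬝ᵥ (X *ᵥ z)| ≤
      c * Real.sqrt (x ⬝ᵥ (Ξ *ᵥ x)) * Real.sqrt (z ⬝ᵥ (Ξ *ᵥ z)))
    (x z : Fin n → ℝ) :
    |x ⬝ᵥ ((β • L X) *ᵥ z)| ≤
      c * ρ * Real.sqrt (x ⬝ᵥ (Ξ *ᵥ x)) * Real.sqrt (z ⬝ᵥ (Ξ *ᵥ z)) := by
  have ht1 : 0 ≤ β * lam := mul_nonneg hβ0.le hlam0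
  have ht0 : 0 ≤ β * (1 - lam) := mul_nonneg hβ0.le (by linarith)
  set q : (Fin n → ℝ) → ℝ := fun y => y ⬝ᵥ (Ξ *ᵥ y) with hq
  set u1 := A₁ᵀ *ᵥ x; set u0 := A₀ᵀ *ᵥ x; set v1 := A₁ᵀ *ᵥ z; set v0 := A₀ᵀ *ᵥ z
  rw [aux_exp' hL]
  have h1 : |(β * lam) * (u1 ⬝ᵥ (X *ᵥ v1)) + (β * (1 - lam)) * (u0 ⬝ᵥ (X *ᵥ v0))|
      ≤ c * ((β * lam) * (Real.sqrt (q u1) * Real.sqrt (q v1))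
          + (β * (1 - lam)) * (Real.sqrt (q u0) * Real.sqrt (q v0))) := by
    calc |(β * lam) * (u1 ⬝ᵥ (X *ᵥ v1)) + (β * (1 - lam)) * (u0 ⬝ᵥ (X *ᵥ v0))|
        ≤ |(β * lam) * (u1 ⬝ᵥ (X *ᵥ v1))| + |(β * (1 - lam)) * (u0 ⬝ᵥ (X *ᵥ v0))| :=
          abs_add_le _ _
      _ = (β * lam) * |u1 ⬝ᵥ (X *ᵥ v1)| + (β * (1 - lam)) * |u0 ⬝ᵥ (X *ᵥ v0)| := by
          rw [abs_mul (β * lam) (u1 ⬝ᵥ (X *ᵥ v1)), abs_mul (β * (1 - lam)) (u0 ⬝ᵥ (X *ᵥ v0)),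
            abs_of_nonneg ht1, abs_of_nonneg ht0]
      _ ≤ (β * lam) * (c * Real.sqrt (q u1) * Real.sqrt (q v1))
          + (β * (1 - lam)) * (c * Real.sqrt (q u0) * Real.sqrt (q v0)) :=
          add_le_add (mul_le_mul_of_nonneg_left (hXb u1 v1) ht1)
            (mul_le_mul_of_nonneg_left (hXb u0 v0) ht0)
      _ = c * ((β * lam) * (Real.sqrt (q u1) * Real.sqrt (q v1))
          + (β * (1 - lam)) * (Real.sqrt (q u0) * Real.sqrt (q v0))) := by ring
  have key : (β * lam) * (Real.sqrt (q u1) * Real.sqrt (q v1))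
      + (β * (1 - lam)) * (Real.sqrt (q u0) * Real.sqrt (q v0))
      ≤ ρ * Real.sqrt (q x) * Real.sqrt (q z) := by
    have hcs := aux_cs2 (Real.sqrt ((β * lam) * q u1)) (Real.sqrt ((β * lam) * q v1))
      (Real.sqrt ((β * (1 - lam)) * q u0)) (Real.sqrt ((β * (1 - lam)) * q v0))
      (Real.sqrt_nonneg _) (Real.sqrt_nonneg _) (Real.sqrt_nonneg _) (Real.sqrt_nonneg _)
    have e1 : Real.sqrt ((β * lam) * q u1) * Real.sqrt ((β * lam) * q v1)
        = (β * lam) * (Real.sqrt (q u1) * Real.sqrt (q v1)) := by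
      rw [Real.sqrt_mul ht1, Real.sqrt_mul ht1]
      rw [show Real.sqrt (β * lam) * Real.sqrt (q u1) * (Real.sqrt (β * lam) * Real.sqrt (q v1))
          = (Real.sqrt (β * lam) * Real.sqrt (β * lam)) * (Real.sqrt (q u1) * Real.sqrt (q v1))
          from by ring, Real.mul_self_sqrt ht1]
    have e0 : Real.sqrt ((β * (1 - lam)) * q u0) * Real.sqrt ((β * (1 - lam)) * q v0)
        = (β * (1 - lam)) * (Real.sqrt (q u0) * Real.sqrt (q v0)) := by
      rw [Real.sqrt_mul ht0, Real.sqrt_mul ht0]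
      rw [show Real.sqrt (β * (1 - lam)) * Real.sqrt (q u0)
          * (Real.sqrt (β * (1 - lam)) * Real.sqrt (q v0))
          = (Real.sqrt (β * (1 - lam)) * Real.sqrt (β * (1 - lam)))
            * (Real.sqrt (q u0) * Real.sqrt (q v0)) from by ring, Real.mul_self_sqrt ht0]
    have e2 : Real.sqrt ((β * lam) * q u1) ^ 2 + Real.sqrt ((β * (1 - lam)) * q u0) ^ 2
        = (β * lam) * q u1 + (β * (1 - lam)) * q u0 := by
      rw [Real.sq_sqrt (mul_nonneg ht1 (hqnn u1)), Real.sq_sqrt (mul_nonneg ht0 (hqnn u0))]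
    have e2' : Real.sqrt ((β * lam) * q v1) ^ 2 + Real.sqrt ((β * (1 - lam)) * q v0) ^ 2
        = (β * lam) * q v1 + (β * (1 - lam)) * q v0 := by
      rw [Real.sq_sqrt (mul_nonneg ht1 (hqnn v1)), Real.sq_sqrt (mul_nonneg ht0 (hqnn v0))]
    have e3 : (β * lam) * q u1 + (β * (1 - lam)) * q u0 ≤ ρ * q x := by
      have h := hρle x
      rw [aux_exp' hL Ξ x x] at h
      exact h
    have e3' : (β * lam) * q v1 + (β * (1 - lam)) * q v0 ≤ ρ * q z := by
      have h := hρle z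
      rw [aux_exp' hL Ξ z z] at h
      exact h
    rw [e1, e0, e2, e2'] at hcs
    refine hcs.trans ?_
    calc Real.sqrt ((β * lam) * q u1 + (β * (1 - lam)) * q u0)
          * Real.sqrt ((β * lam) * q v1 + (β * (1 - lam)) * q v0)
        ≤ Real.sqrt (ρ * q x) * Real.sqrt (ρ * q z) :=
          mul_le_mul (Real.sqrt_le_sqrt e3) (Real.sqrt_le_sqrt e3')
            (Real.sqrt_nonneg _) (Real.sqrt_nonneg _)
      _ = ρ * Real.sqrt (q x) * Real.sqrt (q z) := by
          rw [Real.sqrt_mul hρ0, Real.sqrt_mul hρ0,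
            show Real.sqrt ρ * Real.sqrt (q x) * (Real.sqrt ρ * Real.sqrt (q z))
            = (Real.sqrt ρ * Real.sqrt ρ) * (Real.sqrt (q x) * Real.sqrt (q z)) from by ring,
            Real.mul_self_sqrt hρ0]
          ring
  calc |(β * lam) * (u1 ⬝ᵥ (X *ᵥ v1)) + (β * (1 - lam)) * (u0 ⬝ᵥ (X *ᵥ v0))|
      ≤ c * ((β * lam) * (Real.sqrt (q u1) * Real.sqrt (q v1))
        + (β * (1 - lam)) * (Real.sqrt (q u0) * Real.sqrt (q v0))) := h1
    _ ≤ c * (ρ * Real.sqrt (q x) * Real.sqrt (q z)) := mul_le_mul_of_nonneg_left key hc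
    _ = c * ρ * Real.sqrt (q x) * Real.sqrt (q z) := by ring

end m

lemma aux_psd_iff (X : Matrix (Fin n) (Fin n) ℝ) :
    X.PosSemidef ↔ (Xᵀ = X ∧ ∀ x, 0 ≤ x ⬝ᵥ (X *ᵥ x)) := by
  constructor
  · rintro ⟨h1, h2⟩
    refine ⟨?_, fun x => by simpa using (posSemidef_iff_dotProduct_mulVec.mp ⟨h1, h2⟩).2 x⟩
    rw [← conjTranspose_eq_transpose_of_trivial]; exact h1
  · rintro ⟨h1, h2⟩
    refine posSemidef_iff_dotProduct_mulVec.mpr ⟨?_, fun x => by simpa using h2 x⟩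
    rw [Matrix.IsHermitian, conjTranspose_eq_transpose_of_trivial]; exact h1


/-- Well-posedness of the discounted stochastic Lyapunov equation: under a Lyapunov
certificate of mean-square stability, `P = β 𝓛(P) + C` has a unique symmetric solution,
which is positive semidefinite whenever `C` is. -/
theorem stmt7 (n : ℕ) (A₀ A₁ : Matrix (Fin n) (Fin n) ℝ)
    (lam : ℝ) (hlam0 : 0 ≤ lam) (hlam1 : lam ≤ 1)
    (β : ℝ) (hβ0 : 0 < β) (hβ1 : β ≤ 1)
    (L : Matrix (Fin n) (Fin n) ℝ → Matrix (Fin n) (Fin n) ℝ)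
    (hL : ∀ X, L X = lam • (A₁ * X * A₁ᵀ) + (1 - lam) • (A₀ * X * A₀ᵀ))
    (Ξ : Matrix (Fin n) (Fin n) ℝ) (hΞ : Ξ.PosDef)
    (hlyap : (Ξ - β • L Ξ).PosDef)
    (C : Matrix (Fin n) (Fin n) ℝ) (hC : Cᵀ = C) :
    (∃! P : Matrix (Fin n) (Fin n) ℝ, Pᵀ = P ∧ P = β • L P + C) ∧
      (C.PosSemidef → ∀ P : Matrix (Fin n) (Fin n) ℝ,
        Pᵀ = P → P = β • L P + C → P.PosSemidef) := by
  classical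
  obtain ⟨μ, hμ, hμle⟩ := aux_quad_lower hΞ
  obtain ⟨ν, hν, hνle⟩ := aux_quad_lower hlyap
  obtain ⟨S, hS, hSle⟩ := aux_quad_upper Ξ
  have hqnn : ∀ x : Fin n → ℝ, 0 ≤ x ⬝ᵥ (Ξ *ᵥ x) := fun x =>
    le_trans (mul_nonneg hμ.le (aux_dot_self_nonneg x)) (hμle x)
  -- the contraction factor
  set ρ : ℝ := max (1 - ν / S) 0 with hρdef
  have hρ0 : 0 ≤ ρ := le_max_right _ _
  have hρ1 : ρ < 1 := max_lt (by have : 0 < ν / S := div_pos hν hS; linarith) one_pos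
  have hρle : ∀ x : Fin n → ℝ, x ⬝ᵥ ((β • L Ξ) *ᵥ x) ≤ ρ * (x ⬝ᵥ (Ξ *ᵥ x)) := by
    intro x
    have h1 : ν * (x ⬝ᵥ x) ≤ x ⬝ᵥ ((Ξ - β • L Ξ) *ᵥ x) := hνle x
    have h2 : x ⬝ᵥ ((Ξ - β • L Ξ) *ᵥ x) = x ⬝ᵥ (Ξ *ᵥ x) - x ⬝ᵥ ((β • L Ξ) *ᵥ x) := by
      rw [sub_mulVec, dotProduct_sub]
    have h3 : x ⬝ᵥ (Ξ *ᵥ x) ≤ S * (x ⬝ᵥ x) := hSle x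
    have h4 : (ν / S) * (x ⬝ᵥ (Ξ *ᵥ x)) ≤ ν * (x ⬝ᵥ x) := by
      rw [div_mul_eq_mul_div, div_le_iff₀ hS]
      nlinarith
    have h5 : x ⬝ᵥ ((β • L Ξ) *ᵥ x) ≤ (1 - ν / S) * (x ⬝ᵥ (Ξ *ᵥ x)) := by nlinarith
    exact h5.trans (mul_le_mul_of_nonneg_right (le_max_left _ _) (hqnn x))
  -- killing fixed points of β L
  have hkill : ∀ X : Matrix (Fin n) (Fin n) ℝ, X = β • L X → X = 0 := by
    intro X hfix
    obtain ⟨c, hc, hcb⟩ := aux_bilin_base X hμ hμle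
    have hiter : ∀ k : ℕ, ∀ x z : Fin n → ℝ, |x ⬝ᵥ (X *ᵥ z)| ≤
        c * ρ ^ k * Real.sqrt (x ⬝ᵥ (Ξ *ᵥ x)) * Real.sqrt (z ⬝ᵥ (Ξ *ᵥ z)) := by
      intro k
      induction k with
      | zero => simpa using hcb
      | succ k ih =>
        intro x z
        have h := aux_contract hlam0 hlam1 hβ0 hL Ξ hqnn hρ0 hρle X
          (c := c * ρ ^ k) (by positivity) ih x z
        rw [← hfix] at h
        calc |x ⬝ᵥ (X *ᵥ z)| ≤ c * ρ ^ k * ρ * Real.sqrt (x ⬝ᵥ (Ξ *ᵥ x))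
            * Real.sqrt (z ⬝ᵥ (Ξ *ᵥ z)) := h
          _ = c * ρ ^ (k + 1) * Real.sqrt (x ⬝ᵥ (Ξ *ᵥ x)) * Real.sqrt (z ⬝ᵥ (Ξ *ᵥ z)) := by
            rw [pow_succ]; ring
    have hzero : ∀ x z : Fin n → ℝ, x ⬝ᵥ (X *ᵥ z) = 0 := by
      intro x z
      have hlim : Filter.Tendsto
          (fun k : ℕ => c * ρ ^ k * Real.sqrt (x ⬝ᵥ (Ξ *ᵥ x)) * Real.sqrt (z ⬝ᵥ (Ξ *ᵥ z)))
          Filter.atTop (nhds 0) := by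
        have h0 := tendsto_pow_atTop_nhds_zero_of_lt_one hρ0 hρ1
        have h1 := (h0.const_mul c).mul_const (Real.sqrt (x ⬝ᵥ (Ξ *ᵥ x)))
        have h2 := h1.mul_const (Real.sqrt (z ⬝ᵥ (Ξ *ᵥ z)))
        simpa using h2
      have hle : |x ⬝ᵥ (X *ᵥ z)| ≤ 0 :=
        ge_of_tendsto' hlim (fun k => hiter k x z)
      exact abs_eq_zero.mp (le_antisymm hle (abs_nonneg _))
    ext i j
    have h := hzero (Pi.single i 1) (Pi.single j 1)
    simpa [dotProduct, mulVec, Pi.single_apply, mul_ite, ite_mul,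
      Finset.sum_ite_eq', Finset.sum_ite_eq] using h
  -- the linear endomorphism X ↦ X - β L X
  let g : Matrix (Fin n) (Fin n) ℝ →ₗ[ℝ] Matrix (Fin n) (Fin n) ℝ :=
    { toFun := fun X => X - β • L X
      map_add' := by
        intro X Y
        simp only [hL, Matrix.mul_add, Matrix.add_mul, smul_add]
        abel
      map_smul' := by
        intro a X
        simp only [hL, RingHom.id_apply, Matrix.mul_smul, Matrix.smul_mul]
        rw [show lam • a • (A₁ * X * A₁ᵀ) = a • lam • (A₁ * X * A₁ᵀ) from smul_comm _ _ _,
          show (1 - lam) • a • (A₀ * X * A₀ᵀ) = a • (1 - lam) • (A₀ * X * A₀ᵀ) from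
            smul_comm _ _ _, ← smul_add,
          show β • a • (lam • (A₁ * X * A₁ᵀ) + (1 - lam) • (A₀ * X * A₀ᵀ))
            = a • β • (lam • (A₁ * X * A₁ᵀ) + (1 - lam) • (A₀ * X * A₀ᵀ)) from smul_comm _ _ _,
          smul_sub] }
  have hgapp : ∀ X, g X = X - β • L X := fun X => rfl
  have hginj : Function.Injective g := by
    rw [injective_iff_map_eq_zero]
    intro X hX
    rw [hgapp, sub_eq_zero] at hX
    exact hkill X hX
  have hgsurj : Function.Surjective g := LinearMap.injective_iff_surjective.mp hginj
  obtain ⟨P, hP⟩ := hgsurj C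
  rw [hgapp] at hP
  have hPeq : P = β • L P + C := by rw [← hP]; abel
  have hLtrans : ∀ X : Matrix (Fin n) (Fin n) ℝ, L (Xᵀ) = (L X)ᵀ := by
    intro X
    rw [hL, hL, transpose_add, transpose_smul, transpose_smul, transpose_mul, transpose_mul,
      transpose_transpose, Matrix.mul_assoc]
    rw [transpose_mul, transpose_mul, transpose_transpose, Matrix.mul_assoc]
  have hPsym : Pᵀ = P := by
    apply hginj
    rw [hgapp, hgapp, hP]
    rw [show Pᵀ - β • L Pᵀ = (P - β • L P)ᵀ from by
      rw [transpose_sub, transpose_smul, hLtrans], hP, hC]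
  constructor
  · refine ⟨P, ⟨hPsym, hPeq⟩, ?_⟩
    rintro Q ⟨hQsym, hQeq⟩
    apply hginj
    rw [hgapp, hgapp, hP, sub_eq_iff_eq_add]
    exact hQeq.trans (add_comm _ _)
  · -- PSD part
    intro hCpsd Q hQsym hQeq
    obtain ⟨c, hc, hcb⟩ := aux_bilin_base Q hμ hμle
    set Mk : ℕ → Matrix (Fin n) (Fin n) ℝ := fun k => (fun X => β • L X)^[k] Q with hMkdef
    have hM0 : Mk 0 = Q := rfl
    have hMs : ∀ k, Mk (k + 1) = β • L (Mk k) := fun k =>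
      Function.iterate_succ_apply' (fun X => β • L X) k Q
    have hLsub : ∀ X Y : Matrix (Fin n) (Fin n) ℝ, L X - L Y = L (X - Y) := by
      intro X Y
      rw [hL, hL, hL, Matrix.mul_sub, Matrix.sub_mul, smul_sub, Matrix.mul_sub,
        Matrix.sub_mul, smul_sub]
      abel
    have hCform : ∀ x : Fin n → ℝ, 0 ≤ x ⬝ᵥ (C *ᵥ x) := fun x => by
      simpa using hCpsd.dotProduct_mulVec_nonneg x
    have hsub : ∀ k, ∀ x : Fin n → ℝ, 0 ≤ x ⬝ᵥ ((Q - Mk k) *ᵥ x) := by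
      intro k
      induction k with
      | zero => intro x; rw [hM0]; simp
      | succ k ih =>
        have heq : Q - Mk (k + 1) = β • L (Q - Mk k) + C := by
          rw [hMs k, ← hLsub, smul_sub]
          calc Q - β • L (Mk k) = (β • L Q + C) - β • L (Mk k) := by rw [← hQeq]
            _ = β • L Q - β • L (Mk k) + C := by abel
        intro x
        rw [heq, add_mulVec, dotProduct_add]
        have h1 : 0 ≤ x ⬝ᵥ ((β • L (Q - Mk k)) *ᵥ x) := by
          rw [aux_exp' hL]
          have ht1 : 0 ≤ β * lam := mul_nonneg hβ0.le hlam0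
          have ht0 : 0 ≤ β * (1 - lam) := mul_nonneg hβ0.le (by linarith)
          exact add_nonneg (mul_nonneg ht1 (ih _)) (mul_nonneg ht0 (ih _))
        exact add_nonneg h1 (hCform x)
    have hMb : ∀ k, ∀ x z : Fin n → ℝ, |x ⬝ᵥ (Mk k *ᵥ z)| ≤
        c * ρ ^ k * Real.sqrt (x ⬝ᵥ (Ξ *ᵥ x)) * Real.sqrt (z ⬝ᵥ (Ξ *ᵥ z)) := by
      intro k
      induction k with
      | zero => simpa [hM0] using hcb
      | succ k ih =>
        intro x z
        rw [hMs k]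
        have h := aux_contract hlam0 hlam1 hβ0 hL Ξ hqnn hρ0 hρle (Mk k)
          (c := c * ρ ^ k) (by positivity) ih x z
        calc |x ⬝ᵥ ((β • L (Mk k)) *ᵥ z)| ≤ c * ρ ^ k * ρ * Real.sqrt (x ⬝ᵥ (Ξ *ᵥ x))
            * Real.sqrt (z ⬝ᵥ (Ξ *ᵥ z)) := h
          _ = c * ρ ^ (k + 1) * Real.sqrt (x ⬝ᵥ (Ξ *ᵥ x)) * Real.sqrt (z ⬝ᵥ (Ξ *ᵥ z)) := by
            rw [pow_succ]; ring
    rw [aux_psd_iff]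
    refine ⟨hQsym, fun x => ?_⟩
    have hlim : Filter.Tendsto
        (fun k : ℕ => -(c * ρ ^ k * Real.sqrt (x ⬝ᵥ (Ξ *ᵥ x)) * Real.sqrt (x ⬝ᵥ (Ξ *ᵥ x))))
        Filter.atTop (nhds 0) := by
      have h0 := tendsto_pow_atTop_nhds_zero_of_lt_one hρ0 hρ1
      have h1 := ((h0.const_mul c).mul_const (Real.sqrt (x ⬝ᵥ (Ξ *ᵥ x)))).mul_const
        (Real.sqrt (x ⬝ᵥ (Ξ *ᵥ x)))
      simpa using h1.neg
    refine le_of_tendsto' hlim (fun k => ?_)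
    have h1 : 0 ≤ x ⬝ᵥ (Q *ᵥ x) - x ⬝ᵥ (Mk k *ᵥ x) := by
      have := hsub k x
      rwa [sub_mulVec, dotProduct_sub] at this
    have h2 : -(c * ρ ^ k * Real.sqrt (x ⬝ᵥ (Ξ *ᵥ x)) * Real.sqrt (x ⬝ᵥ (Ξ *ᵥ x)))
        ≤ x ⬝ᵥ (Mk k *ᵥ x) := by
      have := hMb k x x
      have habs := neg_abs_le (x ⬝ᵥ (Mk k *ᵥ x))
      linarith
    linarith
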